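/- arXiv:1901.05368 — 2 statements merged into one kernel-verified Lean document; each statement's English description precedes it below -/
import Mathlib

section
/- Let A be a central simple algebra over a field k. For every ring automorphism α of A (not necessarily k-linear) and every x ∈ A, one has Nrd(α(x)) = α(Nrd(x)), where Nrd denotes the reduced norm of A and α acts on k via its restriction to the center. -/
open scoped TensorProduct

section SN
open Matrix

private lemma det_algEquiv_matrix {K : Type*} [Field K] {n : ℕ}
    (g : Matrix (Fin n) (Fin n) K ≃ₐ[K] Matrix (Fin n) (Fin n) K)
    (r : Matrix (Fin n) (Fin n) K) : (g r).det = r.det := by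
  rcases Nat.eq_zero_or_pos n with hn | hn
  · subst hn; simp [Matrix.det_isEmpty]
  have : NeZero n := ⟨hn.ne'⟩
  set e : Fin n → Fin n → Matrix (Fin n) (Fin n) K :=
    fun i j => Matrix.single i j (1 : K) with he
  have h11 : g (e 0 0) ≠ 0 := by
    intro h
    have h0 : e 0 0 = 0 := g.injective (h.trans (map_zero g).symm)
    have h00 : (e 0 0) 0 0 = (1 : K) := Matrix.single_apply_same 0 0 1
    rw [h0] at h00
    simpa using h00
  obtain ⟨i0, j0, hij⟩ : ∃ i j, g (e 0 0) i j ≠ 0 := by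
    by_contra hc
    push_neg at hc
    exact h11 (Matrix.ext fun i j => hc i j)
  set w : Fin n → K := g (e 0 0) *ᵥ Pi.single j0 1 with hwdef
  have hw : w ≠ 0 := by
    intro h
    have h2 : w i0 = 0 := by rw [h]; rfl
    rw [hwdef, Matrix.mulVec_single] at h2
    exact hij (by simpa using h2)
  have hee : ∀ p q j l : Fin n, e p q * e j l = if q = j then e p l else 0 := by
    intro p q j l
    by_cases h : q = j
    · subst h; simp [he, Matrix.single_mul_single_same]
    · simp [he, Matrix.single_mul_single_of_ne (h := h), h]
  have hw1 : g (e 0 0) *ᵥ w = w := by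
    rw [hwdef, Matrix.mulVec_mulVec, ← _root_.map_mul, hee]
    simp
  set E : Matrix (Fin n) (Fin n) K := Matrix.of (fun i j => (g (e j 0) *ᵥ w) i) with hE
  have hME : ∀ M : Matrix (Fin n) (Fin n) K, ∀ i j, (M * E) i j = (M *ᵥ (g (e j 0) *ᵥ w)) i := by
    intro M i j
    simp [Matrix.mul_apply, Matrix.mulVec, dotProduct, hE]
  have key1 : ∀ p q, g (e p q) * E = E * e p q := by
    intro p q
    ext i j
    rw [hME, Matrix.mulVec_mulVec, ← _root_.map_mul, hee]
    by_cases h : j = q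
    · subst h
      rw [if_pos rfl]
      rw [show e p j = Matrix.single p j (1:K) from rfl,
        Matrix.mul_single_apply_same]
      simp [hE]
    · rw [if_neg (fun hq => h hq.symm),
        show e p q = Matrix.single p q (1:K) from rfl,
        Matrix.mul_single_apply_of_ne (hbj := h)]
      simp
  have key : ∀ r : Matrix (Fin n) (Fin n) K, g r * E = E * r := by
    intro r
    induction r using Matrix.induction_on with
    | h_add a b ha hb => rw [map_add, add_mul, mul_add, ha, hb]
    | h_std_basis i j x =>
      have hsm : Matrix.single i j x = x • e i j := by
        simp [he, Matrix.smul_single]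
      rw [hsm, _root_.map_smul, smul_mul_assoc, mul_smul_comm, key1]
  have hdetE : E.det ≠ 0 := by
    intro hdet
    obtain ⟨x, hx, hEx⟩ := (Matrix.exists_mulVec_eq_zero_iff).2 hdet
    obtain ⟨j1, hj1⟩ : ∃ j, x j ≠ 0 := by
      by_contra hc; push_neg at hc; exact hx (funext fun j => hc j)
    set r : Matrix (Fin n) (Fin n) K := ∑ j, x j • e j 0 with hr
    have hgr : g r *ᵥ w = 0 := by
      have hg : g r = ∑ j, x j • g (e j 0) := by
        rw [hr, map_sum]
        exact Finset.sum_congr rfl fun j _ => _root_.map_smul g _ _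
      rw [hg, ← hEx]
      ext i
      simp only [Matrix.mulVec, dotProduct, Matrix.sum_apply, Matrix.smul_apply,
        Finset.sum_mul, smul_eq_mul, hE, Matrix.of_apply]
      rw [Finset.sum_comm]
      exact Finset.sum_congr rfl fun j _ => Finset.sum_congr rfl fun l _ => by ring
    have hcontr : x j1 • w = 0 := by
      have h1 : e 0 j1 * r = x j1 • e 0 0 := by
        rw [hr, Finset.mul_sum, Finset.sum_eq_single j1]
        · rw [mul_smul_comm, hee, if_pos rfl]
        · intro b _ hb
          rw [mul_smul_comm, hee, if_neg (fun h => hb h.symm), smul_zero]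
        · intro h; exact absurd (Finset.mem_univ j1) h
      have h2 := congrArg (fun M => M *ᵥ w) (congrArg g h1)
      simp only [_root_.map_mul, _root_.map_smul] at h2
      rw [← Matrix.mulVec_mulVec, hgr, Matrix.mulVec_zero] at h2
      rw [Matrix.smul_mulVec, hw1] at h2
      exact h2.symm
    rw [smul_eq_zero] at hcontr
    rcases hcontr with h | h
    · exact hj1 h
    · exact hw h
  have hfin := congrArg Matrix.det (key r)
  rw [Matrix.det_mul, Matrix.det_mul] at hfin
  exact mul_right_cancel₀ hdetE (by rw [hfin, mul_comm])

end SN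

section Twist

variable {k K A : Type*} [Field k] [Field K] [Ring A] [Algebra k A] [Algebra k K]

/-- The semilinear twist `τ ⊗ α` as an additive map on `K ⊗[k] A`. -/
private noncomputable def twistAddHom (σ : k ≃+* k) (τ : K ≃+* K) (α : A ≃+* A)
    (hτ : ∀ t : k, τ (algebraMap k K t) = algebraMap k K (σ t))
    (hα : ∀ t : k, α (algebraMap k A t) = algebraMap k A (σ t)) :
    K ⊗[k] A →+ K ⊗[k] A :=
  TensorProduct.liftAddHom
    { toFun := fun c =>
        { toFun := fun a => τ c ⊗ₜ[k] α a
          map_zero' := by simp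
          map_add' := fun a b => by simp [TensorProduct.tmul_add] }
      map_zero' := by ext a; simp
      map_add' := fun c d => by ext a; simp [TensorProduct.add_tmul] }
    (by
      intro t c a
      simp only [AddMonoidHom.coe_mk, ZeroHom.coe_mk]
      have h1 : τ (t • c) = σ t • τ c := by
        rw [Algebra.smul_def, _root_.map_mul, hτ, ← Algebra.smul_def]
      have h2 : α (t • a) = σ t • α a := by
        rw [Algebra.smul_def, _root_.map_mul, hα, ← Algebra.smul_def]
      rw [h1, h2]
      exact TensorProduct.smul_tmul _ _ _)

@[simp]
private lemma twistAddHom_tmul (σ : k ≃+* k) (τ : K ≃+* K) (α : A ≃+* A)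
    (hτ : ∀ t : k, τ (algebraMap k K t) = algebraMap k K (σ t))
    (hα : ∀ t : k, α (algebraMap k A t) = algebraMap k A (σ t)) (c : K) (a : A) :
    twistAddHom σ τ α hτ hα (c ⊗ₜ[k] a) = τ c ⊗ₜ[k] α a := rfl

private lemma twistAddHom_mul (σ : k ≃+* k) (τ : K ≃+* K) (α : A ≃+* A)
    (hτ : ∀ t : k, τ (algebraMap k K t) = algebraMap k K (σ t))
    (hα : ∀ t : k, α (algebraMap k A t) = algebraMap k A (σ t)) (z₁ z₂ : K ⊗[k] A) :
    twistAddHom σ τ α hτ hα (z₁ * z₂)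
      = twistAddHom σ τ α hτ hα z₁ * twistAddHom σ τ α hτ hα z₂ := by
  induction z₁ using TensorProduct.induction_on with
  | zero => simp
  | add u v hu hv => simp only [add_mul, map_add, hu, hv]
  | tmul c a =>
    induction z₂ using TensorProduct.induction_on with
    | zero => simp
    | add u v hu hv => simp only [mul_add, map_add, hu, hv]
    | tmul d b => simp [Algebra.TensorProduct.tmul_mul_tmul]

/-- The semilinear twist `τ ⊗ α` as a ring automorphism of `K ⊗[k] A`. -/
private noncomputable def twistRingEquiv (σ : k ≃+* k) (τ : K ≃+* K) (α : A ≃+* A)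
    (hτ : ∀ t : k, τ (algebraMap k K t) = algebraMap k K (σ t))
    (hα : ∀ t : k, α (algebraMap k A t) = algebraMap k A (σ t)) :
    K ⊗[k] A ≃+* K ⊗[k] A where
  toFun := twistAddHom σ τ α hτ hα
  invFun := twistAddHom σ.symm τ.symm α.symm
      (fun t => by
        apply τ.injective
        rw [τ.apply_symm_apply, hτ, σ.apply_symm_apply])
      (fun t => by
        apply α.injective
        rw [α.apply_symm_apply, hα, σ.apply_symm_apply])
  left_inv := by
    intro z
    induction z using TensorProduct.induction_on with
    | zero => simp
    | tmul c a => simp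
    | add u v hu hv => simp only [map_add, hu, hv]
  right_inv := by
    intro z
    induction z using TensorProduct.induction_on with
    | zero => simp
    | tmul c a => simp
    | add u v hu hv => simp only [map_add, hu, hv]
  map_add' := map_add _
  map_mul' := twistAddHom_mul σ τ α hτ hα

@[simp]
private lemma twistRingEquiv_tmul (σ : k ≃+* k) (τ : K ≃+* K) (α : A ≃+* A)
    (hτ : ∀ t : k, τ (algebraMap k K t) = algebraMap k K (σ t))
    (hα : ∀ t : k, α (algebraMap k A t) = algebraMap k A (σ t)) (c : K) (a : A) :
    twistRingEquiv σ τ α hτ hα (c ⊗ₜ[k] a) = τ c ⊗ₜ[k] α a := rfl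

end Twist

/-- `Nrd : A → k` is the reduced norm of the central simple `k`-algebra `A`: after base change
to an algebraic closure, `A` becomes a matrix algebra and `Nrd` is computed by the
determinant. -/
def IsReducedNorm (k : Type*) [Field k] (A : Type*) [Ring A] [Algebra k A]
    (Nrd : A → k) : Prop :=
  ∃ (m : ℕ)
    (f : (AlgebraicClosure k) ⊗[k] A ≃ₐ[AlgebraicClosure k]
        Matrix (Fin m) (Fin m) (AlgebraicClosure k)),
    ∀ x : A,
      algebraMap k (AlgebraicClosure k) (Nrd x) = Matrix.det (f ((1 : AlgebraicClosure k) ⊗ₜ[k] x))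

/-- Let `A` be a central simple algebra over a field `k`. For every ring
automorphism `α` of `A` (not necessarily `k`-linear) and every `x ∈ A`, one has
`Nrd (α x) = α (Nrd x)`, where `α` acts on `k` via its restriction to the center
(so the identity is read inside `A` through `algebraMap k A`). -/
theorem reducedNorm_ringAut_comm
    (k : Type*) [Field k] (A : Type*) [Ring A] [Algebra k A]
    [FiniteDimensional k A] [IsSimpleRing A]
    (hcentral : Subalgebra.center k A = ⊥)
    (Nrd : A → k) (hNrd : IsReducedNorm k A Nrd)
    (α : A ≃+* A) (x : A) :
    algebraMap k A (Nrd (α x)) = α (algebraMap k A (Nrd x)) := by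
  have : Nontrivial A := inferInstance
  have hinj : Function.Injective (algebraMap k A) := (algebraMap k A).injective
  -- restriction of α to the center k
  have hmem : ∀ (β : A ≃+* A) (c : k), ∃ c' : k, algebraMap k A c' = β (algebraMap k A c) := by
    intro β c
    have hcen : β (algebraMap k A c) ∈ Subalgebra.center k A := by
      rw [Subalgebra.mem_center_iff]
      intro b
      have hb : b = β (β.symm b) := (β.apply_symm_apply b).symm
      rw [hb, ← _root_.map_mul, ← _root_.map_mul]
      congr 1
      exact (Algebra.commutes c (β.symm b)).symm
    rw [hcentral, Algebra.mem_bot] at hcen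
    obtain ⟨c', hc'⟩ := hcen
    exact ⟨c', hc'⟩
  let s : k → k := fun c => (hmem α c).choose
  have hs : ∀ c, algebraMap k A (s c) = α (algebraMap k A c) := fun c => (hmem α c).choose_spec
  let s' : k → k := fun c => (hmem α.symm c).choose
  have hs' : ∀ c, algebraMap k A (s' c) = α.symm (algebraMap k A c) :=
    fun c => (hmem α.symm c).choose_spec
  let σ : k ≃+* k :=
    { toFun := s
      invFun := s'
      left_inv := fun c => hinj (by rw [hs', hs, RingEquiv.symm_apply_apply])
      right_inv := fun c => hinj (by rw [hs, hs', RingEquiv.apply_symm_apply])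
      map_mul' := fun c d => hinj (by rw [map_mul, hs, hs, hs, map_mul, _root_.map_mul])
      map_add' := fun c d => hinj (by rw [map_add, hs, hs, hs, map_add, _root_.map_add]) }
  have hσ : ∀ c, α (algebraMap k A c) = algebraMap k A (σ c) := fun c => (hs c).symm
  -- extend σ to the algebraic closure
  set K := AlgebraicClosure k
  let τ : K ≃+* K := IsAlgClosure.equivOfEquiv K K σ
  have hτ : ∀ t : k, τ (algebraMap k K t) = algebraMap k K (σ t) := fun t =>
    IsAlgClosure.equivOfEquiv_algebraMap K K σ t
  obtain ⟨m, f, hf⟩ := hNrd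
  let Φ : K ⊗[k] A ≃+* K ⊗[k] A := twistRingEquiv σ τ α hτ hσ
  -- the twisted algebra isomorphism
  let f' : K ⊗[k] A ≃ₐ[K] Matrix (Fin m) (Fin m) K :=
    AlgEquiv.ofRingEquiv (f := (Φ.trans f.toRingEquiv).trans (τ.symm.mapMatrix))
      (by
        intro c
        have h0 : algebraMap K (K ⊗[k] A) c = c ⊗ₜ[k] (1 : A) :=
          Algebra.TensorProduct.algebraMap_apply c
        simp only [RingEquiv.coe_trans, Function.comp_apply, h0]
        have h1 : Φ (c ⊗ₜ[k] (1 : A)) = τ c ⊗ₜ[k] (1 : A) := by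
          have := twistRingEquiv_tmul σ τ α hτ hσ c (1 : A)
          rw [map_one α] at this
          exact this
        rw [h1]
        have h2 : (τ c) ⊗ₜ[k] (1 : A) = algebraMap K (K ⊗[k] A) (τ c) :=
          (Algebra.TensorProduct.algebraMap_apply (τ c)).symm
        rw [h2]
        have h3 : f.toRingEquiv (algebraMap K (K ⊗[k] A) (τ c))
            = algebraMap K (Matrix (Fin m) (Fin m) K) (τ c) := f.commutes (τ c)
        rw [h3]
        ext i j
        simp [Matrix.algebraMap_matrix_apply, RingEquiv.mapMatrix_apply, Matrix.map_apply,
          apply_ite τ.symm])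
  -- compute det (f' (1 ⊗ x))
  have hΦ1 : ∀ y : A, Φ ((1:K) ⊗ₜ[k] y) = (1:K) ⊗ₜ[k] α y := by
    intro y
    have := twistRingEquiv_tmul σ τ α hτ hσ (1:K) y
    rw [map_one τ] at this
    exact this
  have hdet' : ∀ y : A, (f' ((1:K) ⊗ₜ[k] y)).det = τ.symm (algebraMap k K (Nrd (α y))) := by
    intro y
    have : f' ((1:K) ⊗ₜ[k] y) = (f ((1:K) ⊗ₜ[k] α y)).map τ.symm := by
      show τ.symm.mapMatrix (f.toRingEquiv (Φ ((1:K) ⊗ₜ[k] y))) = _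
      rw [hΦ1]
      rfl
    rw [this, ← RingEquiv.mapMatrix_apply, ← RingEquiv.map_det, ← hf (α y)]
  -- uniqueness of the reduced norm via Skolem–Noether
  have huniq : ∀ z : K ⊗[k] A, (f' z).det = (f z).det := by
    intro z
    have : f' z = (f.symm.trans f') (f z) := by simp
    rw [this]
    exact det_algEquiv_matrix (f.symm.trans f') (f z)
  -- conclude
  have hkey : algebraMap k K (Nrd (α x)) = algebraMap k K (σ (Nrd x)) := by
    have h1 := huniq ((1:K) ⊗ₜ[k] x)
    rw [hdet' x, ← hf x] at h1
    have := congrArg τ h1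
    rw [τ.apply_symm_apply, hτ] at this
    exact this
  have : Nrd (α x) = σ (Nrd x) := (algebraMap k K).injective hkey
  rw [this, ← hσ]
end

section
/- Let l/k be a finite cyclic field extension of degree d with Galois group generated by σ, let a ∈ k×, and let A(l/k, σ, a) be the associated cyclic algebra. Suppose α is an automorphism of l with α(k) = k that commutes with σ, and x ∈ l satisfies N_{l/k}(x) = α(a)/a. Then the map sending Σ u^i a_i to Σ (ux)^i α(a_i) is a ring automorphism of A(l/k, σ, a). -/
/-- Let `l/k` be a finite cyclic extension of degree `d` with Galois group
generated by `σ`, let `a ∈ k×`, and let `A = A(l/k, σ, a)` be the associated cyclic algebra,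
presented by a `k`-algebra `A` with an embedding `ι : l → A` and an element `u` such that
`u ^ d = a`, `ι x * u = u * ι (σ x)` (i.e. `u⁻¹ x u = σ x`), and `A = ⊕_{i<d} u^i · ι(l)`
freely.  Suppose `α` is an automorphism of `l` with `α (k) = k` commuting with `σ`, and
`x ∈ l` satisfies `N_{l/k}(x) = α(a)/a`, i.e. `α(a) = N_{l/k}(x) * a`.  Then the map sending
`Σ u^i ι(a_i)` to `Σ (u * ι x)^i ι(α a_i)` is a ring automorphism of `A`. -/
theorem cyclicAlgebra_semilinear_aut
    (k l : Type*) [Field k] [Field l] [Algebra k l] [FiniteDimensional k l] [IsGalois k l]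
    (d : ℕ) (hd : 0 < d) (hdeg : Module.finrank k l = d)
    (σ : l ≃ₐ[k] l) (hσ : ∀ τ : l ≃ₐ[k] l, τ ∈ Subgroup.zpowers σ)
    (a : k) (ha : a ≠ 0)
    (A : Type*) [Ring A] [Algebra k A]
    (ι : l →ₐ[k] A) (u : A)
    (hu : u ^ d = algebraMap k A a)
    (hcomm : ∀ y : l, ι y * u = u * ι (σ y))
    (hfree : ∀ z : A, ∃! c : Fin d → l, z = ∑ i : Fin d, u ^ (i : ℕ) * ι (c i))
    (α : l ≃+* l)
    (hαk : Subring.map α.toRingHom (algebraMap k l).range = (algebraMap k l).range)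
    (hασ : ∀ y : l, α (σ y) = σ (α y))
    (x : l) (hx : α (algebraMap k l a) = algebraMap k l (Algebra.norm k x * a)) :
    ∃ φ : A ≃+* A, ∀ c : Fin d → l,
      φ (∑ i : Fin d, u ^ (i : ℕ) * ι (c i)) =
        ∑ i : Fin d, (u * ι x) ^ (i : ℕ) * ι (α (c i)) := by
  classical
  set v : A := u * ι x with hv_def
  -- x is nonzero
  have hx0 : x ≠ 0 := by
    intro h
    apply ha
    have h1 : Algebra.norm k x = 0 := Algebra.norm_eq_zero_iff.mpr h
    have h2 : α (algebraMap k l a) = 0 := by rw [hx, h1]; simp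
    have h3 : algebraMap k l a = 0 := by
      apply α.injective; rw [h2, map_zero]
    exact (map_eq_zero _).mp h3
  -- order of σ is d
  have hord : orderOf σ = d := by
    rw [orderOf_eq_card_of_forall_mem_zpowers hσ,
      IsGalois.card_aut_eq_finrank, hdeg]
  -- commutation with powers of u
  have hcommn : ∀ (n : ℕ) (y : l), ι y * u ^ n = u ^ n * ι ((σ ^ n) y) := by
    intro n
    induction n with
    | zero => simp
    | succ n ih =>
      intro y
      have hs : (σ ^ (n + 1)) y = σ ((σ ^ n) y) := by
        rw [pow_succ']; rfl
      rw [pow_succ, ← mul_assoc, ih y, mul_assoc, hcomm, ← mul_assoc, ← pow_succ, hs]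
  -- the product of conjugates of x
  set xp : ℕ → l := fun n => ∏ j ∈ Finset.range n, (σ ^ j) x with hxp_def
  have hxp_succ : ∀ n, xp (n + 1) = σ (xp n) * x := by
    intro n
    simp only [hxp_def, Finset.prod_range_succ']
    rw [map_prod]
    congr 1
    refine Finset.prod_congr rfl fun j _ => ?_
    rw [pow_succ']; rfl
  have hxp0 : ∀ n, xp n ≠ 0 := by
    intro n
    refine Finset.prod_ne_zero_iff.mpr fun j _ h => hx0 ?_
    exact (σ ^ j).injective (by rw [map_zero]; exact h)
  -- powers of v
  have hvn : ∀ n : ℕ, v ^ n = u ^ n * ι (xp n) := by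
    intro n
    induction n with
    | zero => simp [hxp_def]
    | succ n ih =>
      rw [pow_succ, ih, hv_def, ← mul_assoc, mul_assoc (u^n), hcomm, ← mul_assoc, ← pow_succ,
        mul_assoc, ← map_mul, hxp_succ]
  -- norm as product
  have hnorm : algebraMap k l (Algebra.norm k x) = xp d := by
    rw [Algebra.norm_eq_prod_automorphisms]
    have hbij : Function.Bijective (fun j : Fin d => σ ^ (j : ℕ)) := by
      rw [Fintype.bijective_iff_injective_and_card]
      constructor
      · intro i j h
        exact Fin.ext <| Set.InjOn.eq_iff (pow_injOn_Iio_orderOf (x := σ))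
          (by simp [hord, i.isLt]) (by simp [hord, j.isLt]) |>.mp h
      · simp [IsGalois.card_aut_eq_finrank, hdeg]; rw [← Nat.card_eq_fintype_card, IsGalois.card_aut_eq_finrank, hdeg]
    rw [← Fintype.prod_bijective _ hbij (fun j : Fin d => (σ ^ (j : ℕ)) x)
      (fun τ => τ x) (fun _ => rfl)]
    simp only [hxp_def]
    exact (Finset.prod_range fun j => (σ ^ j) x).symm
  -- v ^ d
  have hvd : v ^ d = algebraMap k A (Algebra.norm k x * a) := by
    rw [hvn, hu, ← hnorm, ι.commutes, map_mul, Algebra.commutes]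
  -- coordinates
  choose C hC1 hC2 using hfree
  have hCeq : ∀ c : Fin d → l, C (∑ i : Fin d, u ^ (i : ℕ) * ι (c i)) = c :=
    fun c => (hC2 _ c rfl).symm
  -- commutation for v
  have hcommv : ∀ (n : ℕ) (y : l), ι y * v ^ n = v ^ n * ι ((σ ^ n) y) := by
    intro n y
    rw [hvn, ← mul_assoc, hcommn, mul_assoc, ← map_mul, mul_comm ((σ ^ n) y), map_mul,
      ← mul_assoc]
  -- α commutes with powers of σ
  have hασn : ∀ (n : ℕ) (y : l), α ((σ ^ n) y) = (σ ^ n) (α y) := by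
    intro n
    induction n with
    | zero => intro y; rfl
    | succ n ih =>
      intro y
      have h1 : ∀ z : l, (σ ^ (n + 1)) z = σ ((σ ^ n) z) := fun z => by rw [pow_succ']; rfl
      rw [h1, hασ, ih, ← h1]
  -- the map
  set φ0 : A → A := fun z => ∑ i : Fin d, v ^ (i : ℕ) * ι (α (C z i)) with hφ0_def
  have hφEval : ∀ c : Fin d → l,
      φ0 (∑ i : Fin d, u ^ (i : ℕ) * ι (c i)) = ∑ i : Fin d, v ^ (i : ℕ) * ι (α (c i)) := by
    intro c
    simp only [hφ0_def, hCeq]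
  -- additivity
  have hφAdd : ∀ z w : A, φ0 (z + w) = φ0 z + φ0 w := by
    intro z w
    have hsum : z + w = ∑ i : Fin d, u ^ (i : ℕ) * ι (C z i + C w i) := by
      simp only [map_add, mul_add, Finset.sum_add_distrib]
      rw [← hC1, ← hC1]
    have hCadd : C (z + w) = fun i => C z i + C w i := (hC2 _ _ hsum).symm
    simp only [hφ0_def, hCadd, map_add, mul_add, Finset.sum_add_distrib]
  -- basis elements
  have hsingle : ∀ (t : A) (n : ℕ) (hn : n < d) (b : l),
      (∑ j : Fin d, t ^ (j : ℕ) * ι ((Pi.single (⟨n, hn⟩ : Fin d) b : Fin d → l) j)) = t ^ n * ι b := by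
    intro t n hn b
    rw [Finset.sum_eq_single (⟨n, hn⟩ : Fin d)]
    · simp
    · intro j _ hj
      rw [Pi.single_eq_of_ne hj, map_zero, mul_zero]
    · intro h; exact absurd (Finset.mem_univ _) h
  have hφbasis : ∀ (n : ℕ) (hn : n < d) (b : l), φ0 (u ^ n * ι b) = v ^ n * ι (α b) := by
    intro n hn b
    rw [← hsingle u n hn b, hφEval]
    have h1 : ∀ j : Fin d, α ((Pi.single (⟨n, hn⟩ : Fin d) b : Fin d → l) j)
        = (Pi.single (⟨n, hn⟩ : Fin d) (α b) : Fin d → l) j := by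
      intro j
      rcases eq_or_ne j ⟨n, hn⟩ with rfl | h
      · simp
      · simp [Pi.single_eq_of_ne h]
    simp only [h1]
    exact hsingle v n hn (α b)
  -- structure constants
  have hmulp : ∀ (t : A), (∀ (n : ℕ) (y : l), ι y * t ^ n = t ^ n * ι ((σ ^ n) y)) →
      ∀ (m n : ℕ) (b c : l),
        (t ^ m * ι b) * (t ^ n * ι c) = t ^ (m + n) * ι ((σ ^ n) b * c) := by
    intro t hc m n b c
    rw [mul_assoc, ← mul_assoc (ι b), hc, mul_assoc (t ^ n), ← mul_assoc (t ^ m), ← pow_add,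
      map_mul]
  have hpow_shift : ∀ (t : A) (e : k), t ^ d = algebraMap k A e →
      ∀ (m : ℕ) (y : l), t ^ (d + m) * ι y = t ^ m * ι (algebraMap k l e * y) := by
    intro t e he m y
    rw [pow_add, he, Algebra.commutes, mul_assoc, map_mul, ι.commutes]
  -- multiplicativity on basis elements
  have hmulBasis : ∀ (i j : Fin d) (b c : l),
      φ0 ((u ^ (i : ℕ) * ι b) * (u ^ (j : ℕ) * ι c))
        = (v ^ (i : ℕ) * ι (α b)) * (v ^ (j : ℕ) * ι (α c)) := by
    intro i j b c
    rw [hmulp u hcommn, hmulp v hcommv]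
    rcases lt_or_ge ((i : ℕ) + (j : ℕ)) d with h | h
    · rw [hφbasis _ h, map_mul, hασn]
    · have hm : (i : ℕ) + (j : ℕ) = d + ((i : ℕ) + (j : ℕ) - d) := by omega
      have hm' : (i : ℕ) + (j : ℕ) - d < d := by omega
      have harg : α (algebraMap k l a * ((σ ^ (j : ℕ)) b * c))
          = algebraMap k l (Algebra.norm k x * a) * ((σ ^ (j : ℕ)) (α b) * α c) := by
        rw [map_mul, map_mul α ((σ ^ (j : ℕ)) b) c, hx, hασn]
      rw [hm, hpow_shift u a hu, hpow_shift v _ hvd, hφbasis _ hm', harg]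
  -- additivity over sums
  have hφsum : ∀ (f : Fin d → A), φ0 (∑ i : Fin d, f i) = ∑ i : Fin d, φ0 (f i) := by
    intro f
    exact map_sum (AddMonoidHom.mk' φ0 hφAdd) f Finset.univ
  -- full multiplicativity
  have hφmul : ∀ z w : A, φ0 (z * w) = φ0 z * φ0 w := by
    intro z w
    have hzw : z * w = ∑ i : Fin d, ∑ j : Fin d,
        (u ^ (i : ℕ) * ι (C z i)) * (u ^ (j : ℕ) * ι (C w j)) := by
      conv_lhs => rw [hC1 z, hC1 w]
      rw [Finset.sum_mul_sum]
    calc φ0 (z * w)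
        = ∑ i : Fin d, φ0 (∑ j : Fin d,
            (u ^ (i : ℕ) * ι (C z i)) * (u ^ (j : ℕ) * ι (C w j))) := by rw [hzw, hφsum]
      _ = ∑ i : Fin d, ∑ j : Fin d,
            φ0 ((u ^ (i : ℕ) * ι (C z i)) * (u ^ (j : ℕ) * ι (C w j))) :=
          Finset.sum_congr rfl fun i _ => hφsum _
      _ = ∑ i : Fin d, ∑ j : Fin d,
            (v ^ (i : ℕ) * ι (α (C z i))) * (v ^ (j : ℕ) * ι (α (C w j))) :=
          Finset.sum_congr rfl fun i _ => Finset.sum_congr rfl fun j _ => hmulBasis i j _ _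
      _ = (∑ i : Fin d, v ^ (i : ℕ) * ι (α (C z i)))
            * (∑ j : Fin d, v ^ (j : ℕ) * ι (α (C w j))) := (Finset.sum_mul_sum _ _ _ _).symm
      _ = φ0 z * φ0 w := rfl
  -- rewriting v-sums as u-sums
  have hveq : ∀ c : Fin d → l, ∑ i : Fin d, v ^ (i : ℕ) * ι (c i)
      = ∑ i : Fin d, u ^ (i : ℕ) * ι (xp (i : ℕ) * c i) := by
    intro c
    exact Finset.sum_congr rfl fun i _ => by rw [hvn, mul_assoc, ← map_mul]
  -- injectivity
  have hinj : Function.Injective φ0 := by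
    intro z w h
    have h1 : ∑ i : Fin d, u ^ (i : ℕ) * ι (xp (i : ℕ) * α (C z i))
        = ∑ i : Fin d, u ^ (i : ℕ) * ι (xp (i : ℕ) * α (C w i)) := by
      rw [← hveq, ← hveq]
      exact h
    have e1 := hC2 (∑ i : Fin d, u ^ (i : ℕ) * ι (xp (i : ℕ) * α (C w i)))
      (fun i : Fin d => xp (i : ℕ) * α (C z i)) h1.symm
    have e2 := hC2 (∑ i : Fin d, u ^ (i : ℕ) * ι (xp (i : ℕ) * α (C w i)))
      (fun i : Fin d => xp (i : ℕ) * α (C w i)) rfl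
    have e4 : C z = C w := by
      funext i
      have e3 := congrFun (e1.trans e2.symm) i
      exact α.injective (mul_left_cancel₀ (hxp0 _) e3)
    rw [hC1 z, hC1 w, e4]
  -- surjectivity
  have hsurj : Function.Surjective φ0 := by
    intro w
    refine ⟨∑ i : Fin d, u ^ (i : ℕ) * ι (α.symm (C w i / xp (i : ℕ))), ?_⟩
    rw [hφEval, hveq]
    have h1 : ∀ i : Fin d, xp (i : ℕ) * α (α.symm (C w i / xp (i : ℕ))) = C w i := by
      intro i
      rw [α.apply_symm_apply, mul_comm, div_mul_cancel₀ _ (hxp0 _)]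
    simp only [h1]
    exact (hC1 w).symm
  -- assemble
  have hφone : φ0 1 = 1 := by
    have h1 := hφbasis 0 hd (1 : l)
    simpa using h1
  have hφzero : φ0 0 = 0 := by
    have hC0 : C 0 = 0 := (hC2 0 0 (by simp)).symm
    simp [hφ0_def, hC0]
  let F : A →+* A :=
    { toFun := φ0
      map_one' := hφone
      map_mul' := fun z w => hφmul z w
      map_zero' := hφzero
      map_add' := fun z w => hφAdd z w }
  refine ⟨RingEquiv.ofBijective F ⟨hinj, hsurj⟩, fun c => ?_⟩
  show φ0 _ = _
  exact hφEval c
end
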